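/- Let n ≥ 1, h = 1/n, and consider the uniform 1D mesh of [0,1] with cells K_i = (ih,(i+1)h) and centers x_i = (i+1/2)h for i = 0,…,n−1. Let u_0,…,u_{n−1}, v_0,…,v_{n−1} ∈ ℝ be cell values, u_∂₀, u_∂₁, v_∂₀, v_∂₁ ∈ ℝ boundary face values, and define interior face values u_{i+1/2} = (u_i+u_{i+1})/2 for 0 ≤ i ≤ n−2 (similarly for v). For cell i with left face value w_l(i) (equal to u_{i−1/2} if i ≥ 1 and to u_∂₀ if i = 0) and right face value w_r(i) (equal to u_{i+1/2} if i ≤ n−2 and to u_∂₁ if i = n−1), set ∇_i u = (w_r(i) − w_l(i))/h, R_{i,±} = (2/h)(w_{r/l}(i) − u_i − ∇_i u · (±h/2)), and ∇_{i,±} u = ∇_i u + R_{i,±}·(±1). Then the stabilized discrete Dirichlet form satisfies the two-point reduction: ∑_{i=0}^{n−1} (h/2)( ∇_{i,+}u·∇_{i,+}v + ∇_{i,−}u·∇_{i,−}v ) = ∑_{i=0}^{n−2} (u_{i+1} − u_i)(v_{i+1} − v_i)/h + (2/h)(u_0 − u_∂₀)(v_0 − v_∂₀) + (2/h)(u_{n−1}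 − u_∂₁)(v_{n−1} − v_∂₁). -/

import Mathlib

/-- Left face value of cell `i` on the uniform 1D mesh with `n` cells:
boundary value `ub0` if `i = 0`, arithmetic mean of the two adjacent cell
values otherwise. -/
noncomputable def faceL (u : ℕ → ℝ) (ub0 : ℝ) (i : ℕ) : ℝ :=
  if i = 0 then ub0 else (u (i - 1) + u i) / 2

/-- Right face value of cell `i` on the uniform 1D mesh with `n` cells. -/
noncomputable def faceR (n : ℕ) (u : ℕ → ℝ) (ub1 : ℝ) (i : ℕ) : ℝ :=
  if i = n - 1 then ub1 else (u i + u (i + 1)) / 2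

/-- Centered discrete gradient of cell `i` (1D). -/
noncomputable def grad1 (n : ℕ) (h : ℝ) (u : ℕ → ℝ) (ub0 ub1 : ℝ) (i : ℕ) : ℝ :=
  (faceR n u ub1 i - faceL u ub0 i) / h

/-- Residual at the right face of cell `i` (1D, `√d = 1`, `d_{K,σ} = h/2`). -/
noncomputable def resP (n : ℕ) (h : ℝ) (u : ℕ → ℝ) (ub0 ub1 : ℝ) (i : ℕ) : ℝ :=
  (2 / h) * (faceR n u ub1 i - u i - grad1 n h u ub0 ub1 i * (h / 2))

/-- Residual at the left face of cell `i` (1D). -/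
noncomputable def resM (n : ℕ) (h : ℝ) (u : ℕ → ℝ) (ub0 ub1 : ℝ) (i : ℕ) : ℝ :=
  (2 / h) * (faceL u ub0 i - u i - grad1 n h u ub0 ub1 i * (-(h / 2)))

/-- Stabilized gradient on the right half-cell: `∇_i u + R_{i,+}·(+1)`. -/
noncomputable def stabP (n : ℕ) (h : ℝ) (u : ℕ → ℝ) (ub0 ub1 : ℝ) (i : ℕ) : ℝ :=
  grad1 n h u ub0 ub1 i + resP n h u ub0 ub1 i * 1

/-- Stabilized gradient on the left half-cell: `∇_i u + R_{i,−}·(−1)`. -/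
noncomputable def stabM (n : ℕ) (h : ℝ) (u : ℕ → ℝ) (ub0 ub1 : ℝ) (i : ℕ) : ℝ :=
  grad1 n h u ub0 ub1 i + resM n h u ub0 ub1 i * (-1)

open Finset in
/-- on the uniform 1D mesh of `[0,1]` with `n` cells, the
stabilized discrete Dirichlet form reduces to the classical two-point flux
scheme. -/
theorem stmt6 (n : ℕ) (hn : 1 ≤ n) (h : ℝ) (hh : h = 1 / n)
    (u v : ℕ → ℝ) (ub0 ub1 vb0 vb1 : ℝ) :
    ∑ i ∈ range n, (h / 2) *
        (stabP n h u ub0 ub1 i * stabP n h v vb0 vb1 i +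
         stabM n h u ub0 ub1 i * stabM n h v vb0 vb1 i)
      = ∑ i ∈ range (n - 1), (u (i + 1) - u i) * (v (i + 1) - v i) / h
        + (2 / h) * (u 0 - ub0) * (v 0 - vb0)
        + (2 / h) * (u (n - 1) - ub1) * (v (n - 1) - vb1) := by
  obtain ⟨m, rfl⟩ : ∃ m, n = m + 1 := ⟨n - 1, (Nat.succ_pred_eq_of_pos hn).symm⟩
  have hne : h ≠ 0 := by
    rw [hh]
    have : (0:ℝ) < (m + 1 : ℕ) := by positivity
    positivity
  have hP : ∀ (w : ℕ → ℝ) (wb0 wb1 : ℝ) (i : ℕ),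
      stabP (m+1) h w wb0 wb1 i = 2 / h * (faceR (m+1) w wb1 i - w i) := by
    intro w wb0 wb1 i
    simp only [stabP, resP, grad1]
    field_simp
    ring
  have hM : ∀ (w : ℕ → ℝ) (wb0 wb1 : ℝ) (i : ℕ),
      stabM (m+1) h w wb0 wb1 i = 2 / h * (w i - faceL w wb0 i) := by
    intro w wb0 wb1 i
    simp only [stabM, resM, grad1]
    field_simp
    ring
  have key : ∀ i, (h/2) * (stabP (m+1) h u ub0 ub1 i * stabP (m+1) h v vb0 vb1 i
        + stabM (m+1) h u ub0 ub1 i * stabM (m+1) h v vb0 vb1 i)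
      = (2/h) * ((faceR (m+1) u ub1 i - u i) * (faceR (m+1) v vb1 i - v i))
        + (2/h) * ((u i - faceL u ub0 i) * (v i - faceL v vb0 i)) := by
    intro i
    rw [hP, hP, hM, hM]
    field_simp
  simp only [key]
  rw [Finset.sum_add_distrib, Finset.sum_range_succ, Finset.sum_range_succ']
  have hAB : ∀ i ∈ Finset.range m,
      ((2/h) * ((faceR (m+1) u ub1 i - u i) * (faceR (m+1) v vb1 i - v i))
       + (2/h) * ((u (i+1) - faceL u ub0 (i+1)) * (v (i+1) - faceL v vb0 (i+1))))
      = (u (i+1) - u i) * (v (i+1) - v i) / h := by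
    intro i hi
    have hi' : i ≠ m := (Finset.mem_range.mp hi).ne
    simp only [faceR, faceL, if_neg hi', if_neg (Nat.succ_ne_zero i),
      Nat.add_sub_cancel]
    field_simp
    ring
  have hcomb : ∑ i ∈ Finset.range m,
        (2/h) * ((faceR (m+1) u ub1 i - u i) * (faceR (m+1) v vb1 i - v i))
      + ∑ i ∈ Finset.range m,
        (2/h) * ((u (i+1) - faceL u ub0 (i+1)) * (v (i+1) - faceL v vb0 (i+1)))
      = ∑ i ∈ Finset.range m, (u (i+1) - u i) * (v (i+1) - v i) / h := by
    rw [← Finset.sum_add_distrib]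
    exact Finset.sum_congr rfl hAB
  have hRm : faceR (m+1) u ub1 m = ub1 := by simp [faceR]
  have hRm' : faceR (m+1) v vb1 m = vb1 := by simp [faceR]
  have hL0 : faceL u ub0 0 = ub0 := by simp [faceL]
  have hL0' : faceL v vb0 0 = vb0 := by simp [faceL]
  rw [hRm, hRm', hL0, hL0']
  simp only [Nat.add_sub_cancel]
  linarith [hcomb]
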